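/- Let $n\ge 2$ and $1\le k\le n$ be integers, $h\in\mathbb{R}$, $c<0$, and let $g:(a_1,a_2)\to\mathbb{R}$ be differentiable with $g(t)>\sqrt{-c}$, $g'(t)\ne 0$, and $(g'(t))^2 = c + g(t)^2 - g(t)^2\,(h+g(t)^{-n})^2$ for all $t$. Set $\lambda = h+g^{-n}$, $r = g/\sqrt{-c}$, fix $t_0\in(a_1,a_2)$ and let $\theta(t)=\int_{t_0}^t \frac{r(\tau)\lambda(\tau)}{r(\tau)^2-1}\,d\tau$. Let $B_2(s)\in\mathbb{R}^{n+2}$ have $\cos s$ in coordinate $n+1$, $\sin s$ in coordinate $n+2$ and $0$ elsewhere, and $B_3(s)$ have $-\sin s$ in coordinate $n+1$, $\cos s$ in coordinate $n+2$ and $0$ elsewhere. Then $(r')^2 + r^2\lambda^2 = r^2 - 1$ on $(a_1,a_2)$, and for every $y\in\mathbb{R}^{n+2}$ with $y_{n+1}=y_{n+2}=0$ and $\langle y,y\rangle = -1$, the curves $\phi(u) = r(u)\,y + \sqrt{r(u)^2-1}\,B_2(\theta(u))$ and $\nu(u) = -r(u)\lambda(u)\,y - \frac{r(u)^2\lambda(u)}{\sqrt{r(u)^2-1}}\,B_2(\theta(u))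 + \frac{r'(u)}{\sqrt{r(u)^2-1}}\,B_3(\theta(u))$ satisfy: $\langle\phi,\phi\rangle\equiv -1$, $\langle\phi',\phi'\rangle\equiv 1$, $\langle\nu,\nu\rangle\equiv 1$, $\langle\nu,\phi'\rangle\equiv 0$, $\langle\nu(u),v\rangle = 0$ for every $v\in\mathbb{R}^{n+2}$ with $v_{n+1}=v_{n+2}=0$ and $\langle v,y\rangle = 0$, and $\nu'(u) = -(nh-(n-1)\lambda(u))\,\phi'(u)$ for all $u$. -/

import Mathlib

set_option maxHeartbeats 1000000

/-- The semi-riemannian bilinear form of index `k` on `ℝ^m`: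
`⟨v,w⟩ = -v₁w₁ - ⋯ - v_k w_k + v_{k+1} w_{k+1} + ⋯ + v_m w_m`
(coordinates are 0-indexed in Lean, so the first `k` indices carry sign `-1`). -/
noncomputable def semiForm (k : ℕ) {m : ℕ} (v w : Fin m → ℝ) : ℝ :=
  ∑ i : Fin m, (if (i : ℕ) < k then (-1 : ℝ) else 1) * v i * w i

lemma semiForm_comm (k : ℕ) {m : ℕ} (v w : Fin m → ℝ) :
    semiForm k v w = semiForm k w v :=
  Finset.sum_congr rfl (fun i _ => by ring)

lemma semiForm_add_left (k : ℕ) {m : ℕ} (v v' w : Fin m → ℝ) :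
    semiForm k (v + v') w = semiForm k v w + semiForm k v' w := by
  simp only [semiForm, Pi.add_apply, ← Finset.sum_add_distrib]
  exact Finset.sum_congr rfl (fun i _ => by ring)

lemma semiForm_smul_left (k : ℕ) {m : ℕ} (a : ℝ) (v w : Fin m → ℝ) :
    semiForm k (a • v) w = a * semiForm k v w := by
  simp only [semiForm, Pi.smul_apply, smul_eq_mul, Finset.mul_sum]
  exact Finset.sum_congr rfl (fun i _ => by ring)

lemma semiForm_add_right (k : ℕ) {m : ℕ} (v w w' : Fin m → ℝ) :
    semiForm k v (w + w') = semiForm k v w + semiForm k v w' := by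
  rw [semiForm_comm, semiForm_add_left, semiForm_comm k w, semiForm_comm k w']

lemma semiForm_smul_right (k : ℕ) {m : ℕ} (a : ℝ) (v w : Fin m → ℝ) :
    semiForm k v (a • w) = a * semiForm k v w := by
  rw [semiForm_comm, semiForm_smul_left, semiForm_comm]

lemma semiForm_comb (k : ℕ) {m : ℕ} (x z w : Fin m → ℝ) (a b c a' b' c' : ℝ)
    (hxx : semiForm k x x = -1) (hzz : semiForm k z z = 1) (hww : semiForm k w w = 1)
    (hxz : semiForm k x z = 0) (hxw : semiForm k x w = 0) (hzw : semiForm k z w = 0) :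
    semiForm k (a • x + b • z + c • w) (a' • x + b' • z + c' • w)
      = -(a * a') + b * b' + c * c' := by
  have hzx : semiForm k z x = 0 := by rw [semiForm_comm]; exact hxz
  have hwx : semiForm k w x = 0 := by rw [semiForm_comm]; exact hxw
  have hwz : semiForm k w z = 0 := by rw [semiForm_comm]; exact hzw
  simp only [semiForm_add_left, semiForm_add_right, semiForm_smul_left, semiForm_smul_right,
    hxx, hzz, hww, hxz, hxw, hzw, hzx, hwx, hwz]
  ring

lemma sum_two_support {m : ℕ} (j₁ j₂ : Fin m) (hne : j₁ ≠ j₂) (f : Fin m → ℝ)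
    (hf : ∀ i, i ≠ j₁ → i ≠ j₂ → f i = 0) : ∑ i, f i = f j₁ + f j₂ := by
  classical
  rw [← Finset.sum_subset (Finset.subset_univ ({j₁, j₂} : Finset (Fin m)))
    (fun x _ hx => by
      simp only [Finset.mem_insert, Finset.mem_singleton, not_or] at hx
      exact hf x hx.1 hx.2)]
  rw [Finset.sum_pair hne]

lemma semiForm_pair (n k : ℕ) (hkn : k ≤ n) (p₁ p₂ q₁ q₂ : ℝ) (p q : Fin (n + 2) → ℝ)
    (hp : ∀ i : Fin (n + 2), p i = if (i : ℕ) = n then p₁ else if (i : ℕ) = n + 1 then p₂ else 0)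
    (hq : ∀ i : Fin (n + 2), q i = if (i : ℕ) = n then q₁ else if (i : ℕ) = n + 1 then q₂ else 0) :
    semiForm k p q = p₁ * q₁ + p₂ * q₂ := by
  have h1 : ((⟨n, by omega⟩ : Fin (n + 2)) : ℕ) = n := rfl
  have h2 : ((⟨n + 1, by omega⟩ : Fin (n + 2)) : ℕ) = n + 1 := rfl
  rw [semiForm, sum_two_support (⟨n, by omega⟩ : Fin (n + 2)) ⟨n + 1, by omega⟩
    (by simp [Fin.ext_iff])]
  · simp only [hp, hq, h1, h2, if_pos, if_neg (by omega : ¬ n + 1 = n),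
      if_neg (by omega : ¬ n < k), if_neg (by omega : ¬ n + 1 < k), if_true]
    simp
  · intro i hi1 hi2
    have hin : (i : ℕ) ≠ n := fun hh => hi1 (Fin.ext hh)
    have hin1 : (i : ℕ) ≠ n + 1 := fun hh => hi2 (Fin.ext hh)
    rw [hp, if_neg hin, if_neg hin1]; ring

lemma semiForm_vanish (n k : ℕ) (q₁ q₂ : ℝ) (v q : Fin (n + 2) → ℝ)
    (hv : ∀ i : Fin (n + 2), ((i : ℕ) = n ∨ (i : ℕ) = n + 1) → v i = 0)
    (hq : ∀ i : Fin (n + 2), q i = if (i : ℕ) = n then q₁ else if (i : ℕ) = n + 1 then q₂ else 0) :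
    semiForm k v q = 0 := by
  apply Finset.sum_eq_zero
  intro i _
  by_cases h1 : (i : ℕ) = n
  · rw [hv i (Or.inl h1)]; ring
  by_cases h2 : (i : ℕ) = n + 1
  · rw [hv i (Or.inr h2)]; ring
  · rw [hq, if_neg h1, if_neg h2]; ring

/-- Theorem 2.15 of the paper (a family of cmc hypersurfaces of `ℍ_{k-1}^{n+1}`).
Coordinates `n+1` and `n+2` of the paper (1-indexed) are indices `n` and `n+1` here. -/
theorem stmt_6 (n k : ℕ) (hn : 2 ≤ n) (hk1 : 1 ≤ k) (hkn : k ≤ n)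
    (h c a₁ a₂ t₀ : ℝ) (hc : c < 0) (ht₀ : t₀ ∈ Set.Ioo a₁ a₂)
    (g lam r θ : ℝ → ℝ)
    (hgdiff : ∀ t ∈ Set.Ioo a₁ a₂, DifferentiableAt ℝ g t)
    (hgc : ∀ t ∈ Set.Ioo a₁ a₂, Real.sqrt (-c) < g t)
    (hg' : ∀ t ∈ Set.Ioo a₁ a₂, deriv g t ≠ 0)
    (hode : ∀ t ∈ Set.Ioo a₁ a₂,
      deriv g t ^ 2 = c + g t ^ 2 - g t ^ 2 * (h + g t ^ (-(n : ℤ))) ^ 2)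
    (hlam : ∀ t, lam t = h + g t ^ (-(n : ℤ)))
    (hr : ∀ t, r t = g t / Real.sqrt (-c))
    (hθ : ∀ t, θ t = ∫ τ in t₀..t, r τ * lam τ / (r τ ^ 2 - 1))
    (B₂ B₃ : ℝ → Fin (n + 2) → ℝ)
    (hB₂ : ∀ s i, B₂ s i =
      if (i : ℕ) = n then Real.cos s else if (i : ℕ) = n + 1 then Real.sin s else 0)
    (hB₃ : ∀ s i, B₃ s i =
      if (i : ℕ) = n then -Real.sin s else if (i : ℕ) = n + 1 then Real.cos s else 0) :
    (∀ t ∈ Set.Ioo a₁ a₂, deriv r t ^ 2 + r t ^ 2 * lam t ^ 2 = r t ^ 2 - 1) ∧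
    ∀ y : Fin (n + 2) → ℝ,
      (∀ i : Fin (n + 2), ((i : ℕ) = n ∨ (i : ℕ) = n + 1) → y i = 0) →
      semiForm k y y = -1 →
      ∀ φ ν : ℝ → Fin (n + 2) → ℝ,
        (∀ u, φ u = r u • y + Real.sqrt (r u ^ 2 - 1) • B₂ (θ u)) →
        (∀ u, ν u = (-(r u * lam u)) • y
            - (r u ^ 2 * lam u / Real.sqrt (r u ^ 2 - 1)) • B₂ (θ u)
            + (deriv r u / Real.sqrt (r u ^ 2 - 1)) • B₃ (θ u)) →
        ∀ u ∈ Set.Ioo a₁ a₂,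
          semiForm k (φ u) (φ u) = -1 ∧
          semiForm k (deriv φ u) (deriv φ u) = 1 ∧
          semiForm k (ν u) (ν u) = 1 ∧
          semiForm k (ν u) (deriv φ u) = 0 ∧
          (∀ v : Fin (n + 2) → ℝ,
            (∀ i : Fin (n + 2), ((i : ℕ) = n ∨ (i : ℕ) = n + 1) → v i = 0) →
            semiForm k v y = 0 → semiForm k (ν u) v = 0) ∧
          deriv ν u = (-((n : ℝ) * h - ((n : ℝ) - 1) * lam u)) • deriv φ u := by
  have hIo : IsOpen (Set.Ioo a₁ a₂) := isOpen_Ioo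
  have hcpos : (0:ℝ) < -c := by linarith
  have hsa : 0 < Real.sqrt (-c) := Real.sqrt_pos.2 hcpos
  have hsane : Real.sqrt (-c) ≠ 0 := ne_of_gt hsa
  have hsq : Real.sqrt (-c) ^ 2 = -c := Real.sq_sqrt (le_of_lt hcpos)
  have hgpos : ∀ t ∈ Set.Ioo a₁ a₂, 0 < g t := fun t ht => lt_trans hsa (hgc t ht)
  have hgne : ∀ t ∈ Set.Ioo a₁ a₂, g t ≠ 0 := fun t ht => ne_of_gt (hgpos t ht)
  have hrgt1 : ∀ t ∈ Set.Ioo a₁ a₂, 1 < r t := by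
    intro t ht
    rw [hr, lt_div_iff₀ hsa, one_mul]
    exact hgc t ht
  have hρ2pos : ∀ t ∈ Set.Ioo a₁ a₂, 0 < r t ^ 2 - 1 := by
    intro t ht; nlinarith [hrgt1 t ht]
  have hrfun : r = fun t => g t / Real.sqrt (-c) := funext hr
  have hrd : ∀ t ∈ Set.Ioo a₁ a₂, HasDerivAt r (deriv g t / Real.sqrt (-c)) t := by
    intro t ht
    rw [hrfun]
    exact (hgdiff t ht).hasDerivAt.div_const _
  have hr' : ∀ t ∈ Set.Ioo a₁ a₂, deriv r t = deriv g t / Real.sqrt (-c) :=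
    fun t ht => (hrd t ht).deriv
  have hr'ne : ∀ t ∈ Set.Ioo a₁ a₂, deriv r t ≠ 0 := by
    intro t ht; rw [hr' t ht]; exact div_ne_zero (hg' t ht) hsane
  have hODE : ∀ t ∈ Set.Ioo a₁ a₂,
      deriv r t ^ 2 = r t ^ 2 - 1 - r t ^ 2 * lam t ^ 2 := by
    intro t ht
    have h1 := hode t ht
    rw [← hlam t] at h1
    rw [hr' t ht, hr t]
    simp only [div_pow]
    rw [hsq]
    have hcne : c ≠ 0 := ne_of_lt hc
    field_simp
    linear_combination -h1
  -- lam differentiable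
  have hlamfun : lam = fun t => h + g t ^ (-(n:ℤ)) := funext hlam
  have hlamd : ∀ t ∈ Set.Ioo a₁ a₂,
      HasDerivAt lam (((-(n:ℤ)) : ℝ) * g t ^ ((-(n:ℤ)) - 1) * deriv g t) t := by
    intro t ht
    rw [hlamfun]
    have h0 := ((hasDerivAt_zpow (-(n:ℤ)) (g t) (Or.inl (hgne t ht))).comp t
      (hgdiff t ht).hasDerivAt)
    have h1 := h0.const_add h
    refine h1.congr_deriv ?_
    push_cast
    ring
  have hlamr : ∀ t ∈ Set.Ioo a₁ a₂,
      deriv lam t * r t = ((n:ℝ) * h - (n:ℝ) * lam t) * deriv r t := by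
    intro t ht
    rw [(hlamd t ht).deriv, hr' t ht, hr t, hlam t]
    have hz : g t ^ ((-(n:ℤ)) - 1) * g t = g t ^ (-(n:ℤ)) := by
      rw [← zpow_add_one₀ (hgne t ht)]
      norm_num
    push_cast
    linear_combination (-(n:ℝ) * deriv g t / Real.sqrt (-c)) * hz
  -- continuity
  have hrcont : ContinuousOn r (Set.Ioo a₁ a₂) :=
    fun t ht => ((hrd t ht).continuousAt.continuousWithinAt)
  have hlamcont : ContinuousOn lam (Set.Ioo a₁ a₂) :=
    fun t ht => ((hlamd t ht).continuousAt.continuousWithinAt)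
  have hfcont : ContinuousOn (fun τ => r τ * lam τ / (r τ ^ 2 - 1)) (Set.Ioo a₁ a₂) :=
    ContinuousOn.div (hrcont.mul hlamcont) ((hrcont.pow 2).sub continuousOn_const)
      (fun t ht => ne_of_gt (hρ2pos t ht))
  have hθd : ∀ u ∈ Set.Ioo a₁ a₂,
      HasDerivAt θ (r u * lam u / (r u ^ 2 - 1)) u := by
    intro u hu
    have hθfun : θ = fun t => ∫ τ in t₀..t, r τ * lam τ / (r τ ^ 2 - 1) := funext hθ
    rw [hθfun]
    exact intervalIntegral.integral_hasDerivAt_right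
      ((hfcont.mono ((Set.ordConnected_Ioo).uIcc_subset ht₀ hu)).intervalIntegrable)
      (hfcont.stronglyMeasurableAtFilter hIo u hu)
      (hfcont.continuousAt (hIo.mem_nhds hu))
  -- sign of deriv r via Darboux
  obtain ⟨ε, hε2, hεsign⟩ : ∃ ε : ℝ, ε ^ 2 = 1 ∧ ∀ t ∈ Set.Ioo a₁ a₂,
      deriv r t = ε * Real.sqrt (r t ^ 2 - 1 - r t ^ 2 * lam t ^ 2) := by
    have hgdW : ∀ x ∈ Set.Ioo a₁ a₂, HasDerivWithinAt g (deriv g x) (Set.Ioo a₁ a₂) x :=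
      fun x hx => (hgdiff x hx).hasDerivAt.hasDerivWithinAt
    rcases hasDerivWithinAt_forall_lt_or_forall_gt_of_forall_ne (convex_Ioo a₁ a₂) hgdW hg'
      with hneg | hpos
    · refine ⟨-1, by norm_num, fun t ht => ?_⟩
      have h1 : deriv r t < 0 := by
        rw [hr' t ht]; exact div_neg_of_neg_of_pos (hneg t ht) hsa
      have h2 : Real.sqrt (r t ^ 2 - 1 - r t ^ 2 * lam t ^ 2) = |deriv r t| := by
        rw [← hODE t ht, Real.sqrt_sq_eq_abs]
      rw [h2, abs_of_neg h1]; ring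
    · refine ⟨1, by norm_num, fun t ht => ?_⟩
      have h1 : 0 < deriv r t := by
        rw [hr' t ht]; exact div_pos (hpos t ht) hsa
      have h2 : Real.sqrt (r t ^ 2 - 1 - r t ^ 2 * lam t ^ 2) = |deriv r t| := by
        rw [← hODE t ht, Real.sqrt_sq_eq_abs]
      rw [h2, abs_of_pos h1]; ring
  refine ⟨fun t ht => by linarith [hODE t ht], ?_⟩
  intro y hy hyy φ ν hφ hν u hu
  -- local abbreviations
  have hρ2 : 0 < r u ^ 2 - 1 := hρ2pos u hu
  obtain ⟨P, hPdef⟩ : ∃ P, Real.sqrt (r u ^ 2 - 1) = P := ⟨_, rfl⟩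
  have hPpos : 0 < P := hPdef ▸ (Real.sqrt_pos.2 hρ2)
  have hPne : P ≠ 0 := ne_of_gt hPpos
  have hPsq : P ^ 2 = r u ^ 2 - 1 := by rw [← hPdef]; exact Real.sq_sqrt (le_of_lt hρ2)
  have hODEu : deriv r u ^ 2 = r u ^ 2 - 1 - r u ^ 2 * lam u ^ 2 := hODE u hu
  have hlamru : deriv lam u * r u = ((n:ℝ) * h - (n:ℝ) * lam u) * deriv r u := hlamr u hu
  have hr'neu : deriv r u ≠ 0 := hr'ne u hu
  have Hr : HasDerivAt r (deriv r u) u := by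
    rw [hr' u hu]; exact hrd u hu
  have Hlam : HasDerivAt lam (deriv lam u) u := by
    rw [(hlamd u hu).deriv]; exact hlamd u hu
  have Hθ : HasDerivAt θ (r u * lam u / (r u ^ 2 - 1)) u := hθd u hu
  have Hq : HasDerivAt (fun t => r t ^ 2 - 1) (2 * r u * deriv r u) u := by
    have := (Hr.pow 2).sub_const 1
    simpa using this
  have Hρ : HasDerivAt (fun t => Real.sqrt (r t ^ 2 - 1)) (r u * deriv r u / P) u := by
    have h1 := (Real.hasDerivAt_sqrt (ne_of_gt hρ2)).comp u Hq
    refine h1.congr_deriv ?_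
    rw [hPdef]
    field_simp
  -- B₂, B₃ derivatives
  have HB2 : ∀ s, HasDerivAt B₂ (B₃ s) s := by
    intro s
    rw [hasDerivAt_pi]
    intro i
    have hfun : (fun s => B₂ s i) = fun s =>
        (if (i:ℕ) = n then Real.cos s else if (i:ℕ) = n + 1 then Real.sin s else 0) :=
      funext fun s => hB₂ s i
    rw [hfun, hB₃]
    by_cases h1 : (i:ℕ) = n
    · simp only [if_pos h1]; exact Real.hasDerivAt_cos s
    by_cases h2 : (i:ℕ) = n + 1
    · simp only [if_neg h1, if_pos h2]; exact Real.hasDerivAt_sin s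
    · simp only [if_neg h1, if_neg h2]; exact hasDerivAt_const s 0
  have HB3 : ∀ s, HasDerivAt B₃ (-(B₂ s)) s := by
    intro s
    rw [hasDerivAt_pi]
    intro i
    have hfun : (fun s => B₃ s i) = fun s =>
        (if (i:ℕ) = n then -Real.sin s else if (i:ℕ) = n + 1 then Real.cos s else 0) :=
      funext fun s => hB₃ s i
    have hval : (-(B₂ s)) i = -(B₂ s i) := rfl
    rw [hfun, hval, hB₂]
    by_cases h1 : (i:ℕ) = n
    · simp only [if_pos h1]
      exact (Real.hasDerivAt_sin s).neg
    by_cases h2 : (i:ℕ) = n + 1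
    · simp only [if_neg h1, if_pos h2]
      simpa using Real.hasDerivAt_cos s
    · simp only [if_neg h1, if_neg h2]
      simpa using hasDerivAt_const s (0:ℝ)
  have HB2θ0 : HasDerivAt (B₂ ∘ θ) ((r u * lam u / (r u ^ 2 - 1)) • B₃ (θ u)) u :=
    HasDerivAt.scomp (h := θ) u (HB2 (θ u)) Hθ
  have HB2θ : HasDerivAt (fun t => B₂ (θ t))
      ((r u * lam u / (r u ^ 2 - 1)) • B₃ (θ u)) u := HB2θ0
  have HB3θ0 : HasDerivAt (B₃ ∘ θ) ((r u * lam u / (r u ^ 2 - 1)) • (-(B₂ (θ u)))) u :=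
    HasDerivAt.scomp (h := θ) u (HB3 (θ u)) Hθ
  have HB3θ : HasDerivAt (fun t => B₃ (θ t))
      ((r u * lam u / (r u ^ 2 - 1)) • (-(B₂ (θ u)))) u := HB3θ0
  -- derivative of φ
  have hφfun : φ = fun t => r t • y + Real.sqrt (r t ^ 2 - 1) • B₂ (θ t) := funext hφ
  have Hφ : HasDerivAt φ
      (deriv r u • y +
        (P • ((r u * lam u / (r u ^ 2 - 1)) • B₃ (θ u)) +
          (r u * deriv r u / P) • B₂ (θ u))) u := by
    rw [hφfun]
    have := (Hr.smul_const y).add (Hρ.smul HB2θ)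
    rwa [hPdef] at this
  have hscal : P * (r u * lam u / (r u ^ 2 - 1)) = r u * lam u / P := by
    rw [← hPsq]
    field_simp
  have hDφ : deriv φ u = deriv r u • y
      + (r u * deriv r u / P) • B₂ (θ u)
      + (r u * lam u / P) • B₃ (θ u) := by
    rw [Hφ.deriv]
    funext i
    simp only [Pi.add_apply, Pi.smul_apply, smul_eq_mul]
    linear_combination (B₃ (θ u) i) * hscal
  -- base form values
  have hb22 : semiForm k (B₂ (θ u)) (B₂ (θ u)) = 1 := by
    rw [semiForm_pair n k hkn _ _ _ _ _ _ (hB₂ (θ u)) (hB₂ (θ u))]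
    linear_combination Real.cos_sq_add_sin_sq (θ u)
  have hb33 : semiForm k (B₃ (θ u)) (B₃ (θ u)) = 1 := by
    rw [semiForm_pair n k hkn _ _ _ _ _ _ (hB₃ (θ u)) (hB₃ (θ u))]
    linear_combination Real.cos_sq_add_sin_sq (θ u)
  have hb23 : semiForm k (B₂ (θ u)) (B₃ (θ u)) = 0 := by
    rw [semiForm_pair n k hkn _ _ _ _ _ _ (hB₂ (θ u)) (hB₃ (θ u))]
    ring
  have hyb2 : semiForm k y (B₂ (θ u)) = 0 :=
    semiForm_vanish n k _ _ y _ hy (hB₂ (θ u))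
  have hyb3 : semiForm k y (B₃ (θ u)) = 0 :=
    semiForm_vanish n k _ _ y _ hy (hB₃ (θ u))
  -- ν in sum form
  have hνu : ∀ t, ν t = (-(r t * lam t)) • y
      + (-(r t ^ 2 * lam t / Real.sqrt (r t ^ 2 - 1))) • B₂ (θ t)
      + (deriv r t / Real.sqrt (r t ^ 2 - 1)) • B₃ (θ t) := by
    intro t
    rw [hν t, sub_eq_add_neg, ← neg_smul]
  have hνuP : ν u = (-(r u * lam u)) • y
      + (-(r u ^ 2 * lam u / P)) • B₂ (θ u)
      + (deriv r u / P) • B₃ (θ u) := by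
    rw [hνu u, hPdef]
  -- goal 1
  have goal1 : semiForm k (φ u) (φ u) = -1 := by
    have hφu : φ u = r u • y + P • B₂ (θ u) + (0:ℝ) • B₃ (θ u) := by
      rw [hφ u, hPdef, zero_smul, add_zero]
    rw [hφu, semiForm_comb k y _ _ _ _ _ _ _ _ hyy hb22 hb33 hyb2 hyb3 hb23]
    linear_combination hPsq
  -- goal 2
  have goal2 : semiForm k (deriv φ u) (deriv φ u) = 1 := by
    rw [hDφ, semiForm_comb k y _ _ _ _ _ _ _ _ hyy hb22 hb33 hyb2 hyb3 hb23]
    field_simp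
    linear_combination (r u ^ 2 - P ^ 2) * hODEu + (r u ^ 2 * lam u ^ 2 - r u ^ 2) * hPsq
  -- goal 3
  have goal3 : semiForm k (ν u) (ν u) = 1 := by
    rw [hνuP, semiForm_comb k y _ _ _ _ _ _ _ _ hyy hb22 hb33 hyb2 hyb3 hb23]
    field_simp
    linear_combination hODEu + (-1 - r u ^ 2 * lam u ^ 2) * hPsq
  -- goal 4
  have goal4 : semiForm k (ν u) (deriv φ u) = 0 := by
    rw [hνuP, hDφ, semiForm_comb k y _ _ _ _ _ _ _ _ hyy hb22 hb33 hyb2 hyb3 hb23]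
    field_simp
    linear_combination (r u * lam u * deriv r u) * hPsq
  -- goal 5
  have goal5 : ∀ v : Fin (n + 2) → ℝ,
      (∀ i : Fin (n + 2), ((i : ℕ) = n ∨ (i : ℕ) = n + 1) → v i = 0) →
      semiForm k v y = 0 → semiForm k (ν u) v = 0 := by
    intro v hv hvy
    rw [hνuP, semiForm_add_left, semiForm_add_left, semiForm_smul_left, semiForm_smul_left,
      semiForm_smul_left, semiForm_comm k y v, hvy,
      semiForm_comm k (B₂ (θ u)) v, semiForm_vanish n k _ _ v _ hv (hB₂ (θ u)),
      semiForm_comm k (B₃ (θ u)) v, semiForm_vanish n k _ _ v _ hv (hB₃ (θ u))]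
    ring
  -- second derivative of r
  have Hr1 : HasDerivAt (fun t => deriv r t)
      (r u * (1 - lam u ^ 2) - r u * lam u * ((n:ℝ) * h - (n:ℝ) * lam u)) u := by
    have hFd : HasDerivAt (fun t => r t ^ 2 - 1 - r t ^ 2 * lam t ^ 2)
        (2 * r u * deriv r u * (1 - lam u ^ 2) - 2 * r u ^ 2 * lam u * deriv lam u) u := by
      have h1 := Hq.sub ((Hr.pow 2).mul (Hlam.pow 2))
      refine h1.congr_deriv ?_
      simp only [Pi.pow_apply]
      ring
    have hFne : r u ^ 2 - 1 - r u ^ 2 * lam u ^ 2 ≠ 0 := by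
      rw [← hODEu]; positivity
    have hsqrtF : HasDerivAt (fun t => ε * Real.sqrt (r t ^ 2 - 1 - r t ^ 2 * lam t ^ 2))
        (ε * (1 / (2 * Real.sqrt (r u ^ 2 - 1 - r u ^ 2 * lam u ^ 2)) *
          (2 * r u * deriv r u * (1 - lam u ^ 2) - 2 * r u ^ 2 * lam u * deriv lam u))) u :=
      ((Real.hasDerivAt_sqrt hFne).comp u hFd).const_mul ε
    have hev : (fun t => deriv r t) =ᶠ[nhds u]
        (fun t => ε * Real.sqrt (r t ^ 2 - 1 - r t ^ 2 * lam t ^ 2)) :=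
      Filter.eventuallyEq_of_mem (hIo.mem_nhds hu) (fun t ht => hεsign t ht)
    have h2 := hsqrtF.congr_of_eventuallyEq hev
    refine h2.congr_deriv ?_
    have hsF : Real.sqrt (r u ^ 2 - 1 - r u ^ 2 * lam u ^ 2) = ε * deriv r u := by
      rw [hεsign u hu, ← mul_assoc, ← sq, hε2, one_mul]
    rw [hsF]
    have hεne : ε ≠ 0 := by intro hh; rw [hh] at hε2; norm_num at hε2
    field_simp
    linear_combination (-(r u * lam u)) * hlamru
  -- derivative of ν
  have hνfun : ν = fun t => (-(r t * lam t)) • y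
      + (-(r t ^ 2 * lam t / Real.sqrt (r t ^ 2 - 1))) • B₂ (θ t)
      + (deriv r t / Real.sqrt (r t ^ 2 - 1)) • B₃ (θ t) := funext hνu
  have Hc1 : HasDerivAt (fun t => -(r t * lam t))
      (-(deriv r u * lam u + r u * deriv lam u)) u := (Hr.mul Hlam).neg
  have Hc2 : HasDerivAt (fun t => -(r t ^ 2 * lam t / Real.sqrt (r t ^ 2 - 1)))
      (-(((2 * r u ^ 1 * deriv r u * lam u + r u ^ 2 * deriv lam u) * P
        - r u ^ 2 * lam u * (r u * deriv r u / P)) / P ^ 2)) u := by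
    have h1 := (((Hr.pow 2).mul Hlam).div Hρ (by rw [hPdef]; exact hPne)).neg
    rwa [hPdef] at h1
  have Hc3 : HasDerivAt (fun t => deriv r t / Real.sqrt (r t ^ 2 - 1))
      (((r u * (1 - lam u ^ 2) - r u * lam u * ((n:ℝ) * h - (n:ℝ) * lam u)) * P
        - deriv r u * (r u * deriv r u / P)) / P ^ 2) u := by
    have h1 := Hr1.div Hρ (by rw [hPdef]; exact hPne)
    rwa [hPdef] at h1
  have Hν : HasDerivAt ν
      ((-(deriv r u * lam u + r u * deriv lam u)) • y
        + ((-(r u ^ 2 * lam u / P)) • ((r u * lam u / (r u ^ 2 - 1)) • B₃ (θ u))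
          + (-(((2 * r u ^ 1 * deriv r u * lam u + r u ^ 2 * deriv lam u) * P
            - r u ^ 2 * lam u * (r u * deriv r u / P)) / P ^ 2)) • B₂ (θ u))
        + ((deriv r u / P) • ((r u * lam u / (r u ^ 2 - 1)) • (-(B₂ (θ u))))
          + (((r u * (1 - lam u ^ 2) - r u * lam u * ((n:ℝ) * h - (n:ℝ) * lam u)) * P
            - deriv r u * (r u * deriv r u / P)) / P ^ 2) • B₃ (θ u))) u := by
    rw [hνfun]
    have h1 := ((Hc1.smul_const y).add (Hc2.smul HB2θ)).add (Hc3.smul HB3θ)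
    rwa [hPdef] at h1
  -- coefficient identities
  have idy : -(deriv r u * lam u + r u * deriv lam u)
      = -((n:ℝ) * h - ((n:ℝ) - 1) * lam u) * deriv r u := by
    linear_combination -hlamru
  have idB2 : -(((2 * r u ^ 1 * deriv r u * lam u + r u ^ 2 * deriv lam u) * P
        - r u ^ 2 * lam u * (r u * deriv r u / P)) / P ^ 2)
      - (deriv r u / P) * (r u * lam u / (r u ^ 2 - 1))
      = -((n:ℝ) * h - ((n:ℝ) - 1) * lam u) * (r u * deriv r u / P) := by
    rw [← hPsq]
    field_simp
    linear_combination (-(r u * P ^ 2)) * hlamru - (r u * deriv r u * lam u) * hPsq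
  have idB3 : (-(r u ^ 2 * lam u / P)) * (r u * lam u / (r u ^ 2 - 1))
      + ((r u * (1 - lam u ^ 2) - r u * lam u * ((n:ℝ) * h - (n:ℝ) * lam u)) * P
        - deriv r u * (r u * deriv r u / P)) / P ^ 2
      = -((n:ℝ) * h - ((n:ℝ) - 1) * lam u) * (r u * lam u / P) := by
    rw [← hPsq]
    field_simp
    linear_combination (r u) * hPsq - (r u) * hODEu
  have goal6 : deriv ν u = (-((n : ℝ) * h - ((n : ℝ) - 1) * lam u)) • deriv φ u := by
    rw [Hν.deriv, hDφ]
    funext i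
    simp only [Pi.add_apply, Pi.smul_apply, Pi.neg_apply, smul_eq_mul]
    linear_combination (y i) * idy + (B₂ (θ u) i) * idB2 + (B₃ (θ u) i) * idB3
  exact ⟨goal1, goal2, goal3, goal4, goal5, goal6⟩
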